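/- The two-element set {0, σ}, where σ = Σ_{g ∈ Q8} g is the sum of all eight group elements, is a two-sided ideal of the group ring Z/2Z[Q8], and it is the smallest nonzero ideal: it is contained in every nonzero two-sided ideal of Z/2Z[Q8]. -/

import Mathlib

namespace Z2Q8Aux

abbrev Q8 := QuaternionGroup 2
abbrev R := MonoidAlgebra (ZMod 2) Q8

noncomputable def e (g : Q8) : R := MonoidAlgebra.of (ZMod 2) Q8 g

noncomputable def sig : R := ∑ g : Q8, MonoidAlgebra.of (ZMod 2) Q8 g

lemma addself (u : R) : u + u = 0 := by
  have h : ((1 : ZMod 2) + 1) • u = u + u := by rw [add_smul, one_smul]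
  rw [← h, show ((1 : ZMod 2) + 1) = 0 from by decide, zero_smul]

lemma eg_mul (g h : Q8) (x : R) : e (g * h) * x = e g * (e h * x) := by
  rw [e, map_mul, mul_assoc]; rfl

lemma sig_apply (h : Q8) : (sig : R).coeff h = 1 := by
  rw [sig]
  rw [show ((∑ g : Q8, MonoidAlgebra.of (ZMod 2) Q8 g : R)).coeff h
      = ∑ g : Q8, (MonoidAlgebra.of (ZMod 2) Q8 g : R).coeff h by
    rw [MonoidAlgebra.coeff_sum, Finset.sum_apply']]
  have : ∀ g : Q8, (MonoidAlgebra.of (ZMod 2) Q8 g : R).coeff h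
      = if g = h then 1 else 0 := by
    intro g
    simp [MonoidAlgebra.of_apply, MonoidAlgebra.coeff_single, Finsupp.single_apply]
  rw [Finset.sum_congr rfl fun g _ => this g, Finset.sum_ite_eq' Finset.univ h fun _ => (1 : ZMod 2)]
  simp

lemma sig_ne : (sig : R) ≠ 0 := by
  intro h
  have := sig_apply 1
  rw [h] at this
  simp at this

lemma of_mul_sig (g : Q8) : e g * sig = sig := by
  rw [sig, e, Finset.mul_sum]
  have : ∀ h : Q8, MonoidAlgebra.of (ZMod 2) Q8 g * MonoidAlgebra.of (ZMod 2) Q8 h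
      = MonoidAlgebra.of (ZMod 2) Q8 (g * h) := fun h => (map_mul _ _ _).symm
  rw [Finset.sum_congr rfl fun h _ => this h]
  exact Fintype.sum_equiv (Equiv.mulLeft g) _ _ fun h => rfl

lemma sig_mul_of (g : Q8) : sig * e g = sig := by
  rw [sig, e, Finset.sum_mul]
  have : ∀ h : Q8, MonoidAlgebra.of (ZMod 2) Q8 h * MonoidAlgebra.of (ZMod 2) Q8 g
      = MonoidAlgebra.of (ZMod 2) Q8 (h * g) := fun h => (map_mul _ _ _).symm
  rw [Finset.sum_congr rfl fun h _ => this h]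
  exact Fintype.sum_equiv (Equiv.mulRight g) _ _ fun h => rfl

lemma mul_sig_mem (r : R) : r * sig = 0 ∨ r * sig = sig := by
  induction r using MonoidAlgebra.induction_on with
  | of g => exact Or.inr (of_mul_sig g)
  | add f g hf hg =>
    rw [add_mul]
    rcases hf with hf | hf <;> rcases hg with hg | hg <;> rw [hf, hg] <;>
      simp [addself sig]
  | smul c f hf =>
    rw [smul_mul_assoc]
    have hc : c = 0 ∨ c = 1 := by revert c; decide
    rcases hc with rfl | rfl
    · simp
    · simpa using hf

lemma sig_mul_mem (r : R) : sig * r = 0 ∨ sig * r = sig := by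
  induction r using MonoidAlgebra.induction_on with
  | of g => exact Or.inr (sig_mul_of g)
  | add f g hf hg =>
    rw [mul_add]
    rcases hf with hf | hf <;> rcases hg with hg | hg <;> rw [hf, hg] <;>
      simp [addself sig]
  | smul c f hf =>
    rw [mul_smul_comm]
    have hc : c = 0 ∨ c = 1 := by revert c; decide
    rcases hc with rfl | rfl
    · simp
    · simpa using hf

lemma eq_sig (x : R) (hx : x ≠ 0) (h : ∀ g : Q8, e g * x = x) : x = sig := by
  have key : ∀ g : Q8, x.coeff g = x.coeff 1 := by
    intro g
    have := h g⁻¹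
    have h2 : (e g⁻¹ * x : R).coeff 1 = x.coeff ((g⁻¹)⁻¹ * 1) := by
      rw [e, MonoidAlgebra.of_apply]
      rw [MonoidAlgebra.coeff_single_mul_apply x (1 : ZMod 2) g⁻¹ 1, one_mul]
    rw [this] at h2
    rw [h2, inv_inv, mul_one]
  have hx1 : x.coeff 1 ≠ 0 := by
    intro h0
    apply hx
    ext g
    rw [key g, h0]; rfl
  have hx1' : x.coeff 1 = 1 := by
    revert hx1; generalize x.coeff 1 = c; revert c; decide
  ext g
  rw [key g, hx1', sig_apply]

lemma fix_of (u y : R) (h : (1 + u) * y = 0) : u * y = y := by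
  have h' : y + u * y = 0 := by rw [← h, add_mul, one_mul]
  calc u * y = u * y + (y + u * y) := by rw [h', add_zero]
    _ = y + (u * y + u * y) := by abel
    _ = y := by rw [addself, add_zero]

lemma step (u y : R) (hsq : (1 + u) * ((1 + u) * y) = 0) (h0 : y ≠ 0) :
    ∃ w : R, (w = y ∨ w = (1 + u) * y) ∧ w ≠ 0 ∧ u * w = w := by
  by_cases h : (1 + u) * y = 0
  · exact ⟨y, Or.inl rfl, h0, fix_of u y h⟩
  · exact ⟨(1 + u) * y, Or.inr rfl, h, fix_of u _ hsq⟩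

-- group element abbreviations
noncomputable def A : Q8 := QuaternionGroup.a 1
noncomputable def B : Q8 := QuaternionGroup.xa 0
noncomputable def Z : Q8 := QuaternionGroup.a 2

lemma sq_exp (u y : R) : (1 + u) * ((1 + u) * y) = (1 + u * u) * y + (u * y + u * y) := by
  noncomm_ring

lemma key (I : Ideal R) (x : R) (hx : x ∈ I) (hx0 : x ≠ 0) : sig ∈ I := by
  have hZZ : e Z * e Z = 1 := by
    rw [e, ← map_mul, show Z * Z = 1 from by decide, map_one]
  have hAA : e A * e A = e Z := by
    rw [e, e, ← map_mul, show A * A = Z from by decide]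
  have hBB : e B * e B = e Z := by
    rw [e, e, ← map_mul, show B * B = Z from by decide]
  have hZA : e Z * e A = e A * e Z := by
    rw [e, e, ← map_mul, ← map_mul, show Z * A = A * Z from by decide]
  -- stage 1: make x fixed by Z
  obtain ⟨y, hy, hy0, hyZ⟩ := step (e Z) x
    (by rw [sq_exp, hZZ, addself (1 : R), zero_mul, addself, zero_add]) hx0
  have hyI : y ∈ I := by
    rcases hy with rfl | rfl
    · exact hx
    · exact Ideal.mul_mem_left I _ hx
  -- stage 2: make it fixed by A (Z-fixedness is preserved)
  obtain ⟨w, hw, hw0, hwA⟩ := step (e A) y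
    (by rw [sq_exp, hAA, addself (e A * y), add_zero, add_mul, one_mul, hyZ, addself]) hy0
  have hwI : w ∈ I := by
    rcases hw with rfl | rfl
    · exact hyI
    · exact Ideal.mul_mem_left I _ hyI
  have hwZ : e Z * w = w := by
    rcases hw with rfl | rfl
    · exact hyZ
    · have hcomm : e Z * (1 + e A) = (1 + e A) * e Z := by
        rw [mul_add, add_mul, mul_one, one_mul, hZA]
      rw [← mul_assoc, hcomm, mul_assoc, hyZ]
  -- stage 3: make it fixed by B (A-fixedness is preserved)
  obtain ⟨v, hv, hv0, hvB⟩ := step (e B) w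
    (by rw [sq_exp, hBB, addself (e B * w), add_zero, add_mul, one_mul, hwZ, addself]) hw0
  have hvI : v ∈ I := by
    rcases hv with rfl | rfl
    · exact hwI
    · exact Ideal.mul_mem_left I _ hwI
  have hvA : e A * v = v := by
    rcases hv with rfl | rfl
    · exact hwA
    · have hab : e A * (e B * w) = e B * w := by
        rw [← eg_mul, show A * B = B * (A * (A * A)) from by decide,
          eg_mul, eg_mul, eg_mul, hwA, hwA, hwA]
      rw [add_mul, one_mul, mul_add, hwA, hab]
  -- v is fixed by every group element
  have hall : ∀ g : Q8, e g * v = v := by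
    have h1 : e (1 : Q8) * v = v := by rw [e, map_one, one_mul]
    intro g
    rcases g with i | i
    · fin_cases i
      · exact h1
      · exact hvA
      · show e (QuaternionGroup.a 2) * v = v
        rw [show (QuaternionGroup.a 2 : Q8) = A * A from by decide, eg_mul, hvA, hvA]
      · show e (QuaternionGroup.a 3) * v = v
        rw [show (QuaternionGroup.a 3 : Q8) = A * (A * A) from by decide,
          eg_mul, eg_mul, hvA, hvA, hvA]
    · fin_cases i
      · exact hvB
      · show e (QuaternionGroup.xa 1) * v = v
        rw [show (QuaternionGroup.xa 1 : Q8) = A * (A * (A * B)) from by decide,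
          eg_mul, eg_mul, eg_mul, hvB, hvA, hvA, hvA]
      · show e (QuaternionGroup.xa 2) * v = v
        rw [show (QuaternionGroup.xa 2 : Q8) = A * (A * B) from by decide,
          eg_mul, eg_mul, hvB, hvA, hvA]
      · show e (QuaternionGroup.xa 3) * v = v
        rw [show (QuaternionGroup.xa 3 : Q8) = A * B from by decide,
          eg_mul, hvB, hvA]
  rw [← eq_sig v hv0 hall]
  exact hvI

end Z2Q8Aux

/-- `{0, σ}` with `σ = Σ_{g ∈ Q8} g` is a two-sided ideal of `(ZMod 2)[Q8]`,
contained in every nonzero two-sided ideal. -/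
theorem z2_q8_smallest_ideal :
    let σ : MonoidAlgebra (ZMod 2) (QuaternionGroup 2) :=
      ∑ g : QuaternionGroup 2, MonoidAlgebra.of (ZMod 2) (QuaternionGroup 2) g
    let S : Set (MonoidAlgebra (ZMod 2) (QuaternionGroup 2)) := {0, σ}
    σ ≠ 0 ∧
    (∀ x ∈ S, ∀ y ∈ S, x + y ∈ S) ∧
    (∀ x ∈ S, ∀ r : MonoidAlgebra (ZMod 2) (QuaternionGroup 2), r * x ∈ S ∧ x * r ∈ S) ∧
    (∀ I : Ideal (MonoidAlgebra (ZMod 2) (QuaternionGroup 2)),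
      (∀ x ∈ I, ∀ r : MonoidAlgebra (ZMod 2) (QuaternionGroup 2), x * r ∈ I) →
      I ≠ ⊥ → S ⊆ I) := by
  intro σ S
  have hσ : σ = Z2Q8Aux.sig := rfl
  have h0S : (0 : MonoidAlgebra (ZMod 2) (QuaternionGroup 2)) ∈ S := Set.mem_insert _ _
  have hσS : σ ∈ S := Set.mem_insert_of_mem _ rfl
  refine ⟨by rw [hσ]; exact Z2Q8Aux.sig_ne, ?_, ?_, ?_⟩
  · intro x hx y hy
    rcases hx with rfl | hx
    · rcases hy with rfl | hy
      · rw [add_zero]; exact h0S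
      · rw [Set.mem_singleton_iff] at hy; subst hy; rw [zero_add]; exact hσS
    · rw [Set.mem_singleton_iff] at hx; subst hx
      rcases hy with rfl | hy
      · rw [add_zero]; exact hσS
      · rw [Set.mem_singleton_iff] at hy; subst hy
        rw [hσ, Z2Q8Aux.addself]; exact h0S
  · intro x hx r
    rcases hx with rfl | hx
    · exact ⟨by rw [mul_zero]; exact h0S, by rw [zero_mul]; exact h0S⟩
    · rw [Set.mem_singleton_iff] at hx; subst hx
      constructor
      · rcases Z2Q8Aux.mul_sig_mem r with h | h
        · rw [hσ, h]; exact h0S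
        · rw [hσ, h, ← hσ]; exact hσS
      · rcases Z2Q8Aux.sig_mul_mem r with h | h
        · rw [hσ, h]; exact h0S
        · rw [hσ, h, ← hσ]; exact hσS
  · intro I _ hne t ht
    obtain ⟨x, hxI, hx0⟩ := (Submodule.ne_bot_iff I).mp hne
    rcases ht with rfl | ht
    · exact I.zero_mem
    · rw [Set.mem_singleton_iff] at ht; subst ht
      rw [hσ]
      exact Z2Q8Aux.key I x hxI hx0
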